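/- Suppose r ∈ M(A,B) admits α, β : {p_1, …, p_n} → ℚ[G] with r(p_i,p_j) = α(p_i)(e − p_j) + β(p_j)(e − p_i) for all i, j, and suppose moreover that (α(p_i) + β(p_i))(e − p_j) ∈ ℤ[G] for all i, j = 1, …, n. Then r belongs to 𝒜 + ℬ, i.e. there exist α̃, β̃ : {p_1, …, p_n} → ℤ[G] with r(p_i,p_j) = α̃(p_i)(e − p_j) + β̃(p_j)(e − p_i) for all i, j. -/

import Mathlib

open MonoidAlgebra Finset

/-- The integral group ring ℤ[G]. -/
noncomputable abbrev ZG (G : Type) [CommGroup G] := MonoidAlgebra ℤ G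

/-- The rational group ring ℚ[G]. -/
noncomputable abbrev QG (G : Type) [CommGroup G] := MonoidAlgebra ℚ G

/-- The canonical embedding ℤ[G] → ℚ[G]. -/
noncomputable def toQ (G : Type) [CommGroup G] : ZG G →ₐ[ℤ] QG G :=
  MonoidAlgebra.lift ℤ (QG G) G (MonoidAlgebra.of ℚ G)

/-- "x ∈ ℤ[G]" for an element x of ℚ[G]. -/
def MemZG (G : Type) [CommGroup G] (x : QG G) : Prop := ∃ z : ZG G, toQ G z = x

/-- G = ℤ_{m₁} × ℤ_{m₂} × ⋯ × ℤ_{mₙ}, written multiplicatively. -/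
abbrev Gr {n : ℕ} (m : Fin n → ℕ) : Type := (i : Fin n) → Multiplicative (ZMod (m i))

/-- pᵢ, the generator of the i-th factor of G. -/
def pgen {n : ℕ} (m : Fin n → ℕ) (i : Fin n) : Gr m :=
  Pi.mulSingle i (Multiplicative.ofAdd 1)

/-- Pᵢ = e + pᵢ + pᵢ² + ⋯ + pᵢ^{mᵢ−1} ∈ ℤ[G]. -/
noncomputable def Pel {n : ℕ} (m : Fin n → ℕ) (i : Fin n) : ZG (Gr m) :=
  ∑ k ∈ Finset.range (m i), (MonoidAlgebra.of ℤ (Gr m) (pgen m i)) ^ k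

/-- Qᵢ = ∏_{j ≠ i} Pⱼ ∈ ℤ[G]. -/
noncomputable def Qel {n : ℕ} (m : Fin n → ℕ) (i : Fin n) : ZG (Gr m) :=
  ∏ j ∈ Finset.univ.erase i, Pel m j

/-- N = Σ_{g ∈ G} g ∈ ℤ[G]. -/
noncomputable def Nel {n : ℕ} (m : Fin n → ℕ) [∀ i, NeZero (m i)] : ZG (Gr m) :=
  ∑ g : Gr m, MonoidAlgebra.of ℤ (Gr m) g

namespace St12

/-- The quotient ℚ/ℤ. -/
instance instCoeFunMA {R G : Type} [Semiring R] : CoeFun (MonoidAlgebra R G) (fun _ => G → R) :=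
  ⟨fun x => x.coeff⟩

abbrev QZ : Type := ℚ ⧸ AddSubgroup.zmultiples (1 : ℚ)

noncomputable def phi : ℚ →+ QZ := QuotientAddGroup.mk' _

lemma phi_eq_iff {a b : ℚ} : phi a = phi b ↔ ∃ k : ℤ, a - b = k := by
  rw [phi, QuotientAddGroup.mk'_apply, QuotientAddGroup.mk'_apply,
    QuotientAddGroup.eq_iff_sub_mem, AddSubgroup.mem_zmultiples_iff]
  constructor
  · rintro ⟨k, hk⟩; exact ⟨k, by simpa using hk.symm⟩
  · rintro ⟨k, hk⟩; exact ⟨k, by simpa using hk.symm⟩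

lemma phi_eq_zero_iff {a : ℚ} : phi a = 0 ↔ ∃ k : ℤ, a = k := by
  have : (0 : QZ) = phi 0 := by simp
  rw [this, phi_eq_iff]
  simp

lemma phi_intCast (k : ℤ) : phi (k : ℚ) = 0 := phi_eq_zero_iff.mpr ⟨k, rfl⟩

lemma toQ_apply {G : Type} [CommGroup G] (z : ZG G) (g : G) :
    toQ G z g = ((z g : ℤ) : ℚ) := by
  classical
  induction z using MonoidAlgebra.induction_linear with
  | zero => simp [toQ]
  | add f₁ f₂ h1 h2 =>
      rw [map_add]
      rw [MonoidAlgebra.coeff_add, MonoidAlgebra.coeff_add, Finsupp.add_apply, Finsupp.add_apply, h1, h2]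
      push_cast; ring
  | single a k =>
      show (toQ G) (MonoidAlgebra.single a k) g = _
      rw [toQ, MonoidAlgebra.lift_single]
      rw [MonoidAlgebra.of_apply, MonoidAlgebra.coeff_smul, Finsupp.smul_apply, MonoidAlgebra.coeff_single,
        MonoidAlgebra.coeff_single, Finsupp.single_apply, Finsupp.single_apply]
      split <;> simp

lemma mul_one_sub_applyQ {G : Type} [CommGroup G] (x : QG G) (p g : G) :
    (x * (1 - MonoidAlgebra.of ℚ G p)) g = x g - x (g * p⁻¹) := by
  rw [mul_sub, mul_one, MonoidAlgebra.coeff_sub, Finsupp.sub_apply, MonoidAlgebra.of_apply,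
    MonoidAlgebra.coeff_mul_single_apply, mul_one]

lemma mul_one_sub_applyZ {G : Type} [CommGroup G] (x : ZG G) (p g : G) :
    (x * (1 - MonoidAlgebra.of ℤ G p)) g = x g - x (g * p⁻¹) := by
  rw [mul_sub, mul_one, MonoidAlgebra.coeff_sub, Finsupp.sub_apply, MonoidAlgebra.of_apply,
    MonoidAlgebra.coeff_mul_single_apply, mul_one]



variable {n : ℕ} (m : Fin n → ℕ)

/-- i-th coordinate of g, as a natural number. -/
def cd (g : Gr m) (i : Fin n) : ℕ := (Multiplicative.toAdd (g i)).val

/-- truncation: keep coordinates < l, set the rest to 1. -/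
def cut (l : ℕ) (g : Gr m) : Gr m := fun j => if (j : ℕ) < l then g j else 1

/-- path point: coordinates of g below i, then k at coordinate i, then 1. -/
def pt (i : Fin n) (k : ℕ) (g : Gr m) : Gr m := cut m i g * (pgen m i) ^ k

lemma pgen_pow_apply_self (i : Fin n) (k : ℕ) :
    ((pgen m i) ^ k) i = Multiplicative.ofAdd ((k : ZMod (m i))) := by
  rw [Pi.pow_apply, pgen, Pi.mulSingle_eq_same, ← ofAdd_nsmul]
  congr 1
  simp [nsmul_eq_mul]

lemma pgen_pow_apply_ne (i j : Fin n) (k : ℕ) (h : j ≠ i) :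
    ((pgen m i) ^ k) j = 1 := by
  rw [Pi.pow_apply, pgen, Pi.mulSingle_eq_of_ne h, one_pow]

lemma pgen_pow_m (i : Fin n) : (pgen m i) ^ (m i) = 1 := by
  funext j
  rcases eq_or_ne j i with rfl | h
  · rw [pgen_pow_apply_self]; simp
  · rw [pgen_pow_apply_ne _ _ _ _ h]; rfl

lemma mulSingle_eq_pgen_pow (j : Fin n) (x : Multiplicative (ZMod (m j))) [NeZero (m j)] :
    Pi.mulSingle j x = (pgen m j) ^ (Multiplicative.toAdd x).val := by
  funext l
  rcases eq_or_ne l j with rfl | h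
  · rw [Pi.mulSingle_eq_same, pgen_pow_apply_self]
    rw [ZMod.natCast_rightInverse _]
    rfl
  · rw [Pi.mulSingle_eq_of_ne h, pgen_pow_apply_ne _ _ _ _ h]

lemma mul_pgen_inv_apply_ne (g : Gr m) (i j : Fin n) (h : j ≠ i) :
    (g * (pgen m i)⁻¹) j = g j := by
  rw [Pi.mul_apply, Pi.inv_apply, pgen, Pi.mulSingle_eq_of_ne h]
  simp

lemma cd_mul_pgen_inv_ne (g : Gr m) (i j : Fin n) (h : j ≠ i) :
    cd m (g * (pgen m i)⁻¹) j = cd m g j := by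
  rw [cd, cd, mul_pgen_inv_apply_ne _ _ _ _ h]

lemma toAdd_mul_pgen_inv_self (g : Gr m) (i : Fin n) :
    Multiplicative.toAdd ((g * (pgen m i)⁻¹) i) = Multiplicative.toAdd (g i) - 1 := by
  rw [Pi.mul_apply, Pi.inv_apply, pgen, Pi.mulSingle_eq_same, toAdd_mul, toAdd_inv]
  simp [sub_eq_add_neg]

lemma val_sub_one {M : ℕ} [NeZero M] (a : ZMod M) :
    (a - 1).val = if a.val = 0 then M - 1 else a.val - 1 := by
  have hM : 0 < M := Nat.pos_of_ne_zero (NeZero.ne M)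
  rcases eq_or_ne a 0 with rfl | ha
  · rw [if_pos (by simp), zero_sub]
    have : (-1 : ZMod M) = ((M - 1 : ℕ) : ZMod M) := by
      push_cast [Nat.cast_sub hM]
      simp
    rw [this, ZMod.val_cast_of_lt (by omega)]
  · have hv : a.val ≠ 0 := fun hv => ha (by
      have := ZMod.natCast_rightInverse (n := M) a
      rw [← this, hv]; simp)
    rw [if_neg hv]
    have h1 : a = ((a.val : ℕ) : ZMod M) := (ZMod.natCast_rightInverse a).symm
    have h2 : a - 1 = (((a.val - 1 : ℕ)) : ZMod M) := by
      rw [Nat.cast_sub (by omega : 1 ≤ a.val), Nat.cast_one, ZMod.natCast_rightInverse a]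
    rw [h2, ZMod.val_cast_of_lt (by have := a.val_lt; omega)]

lemma cut_mul_pgen_inv_le (g : Gr m) (i : Fin n) (l : ℕ) (hl : l ≤ (i : ℕ)) :
    cut m l (g * (pgen m i)⁻¹) = cut m l g := by
  funext j
  simp only [cut]
  split
  · next hj => exact mul_pgen_inv_apply_ne _ _ _ _ (by
      intro e; rw [e] at hj; omega)
  · rfl

lemma cut_mul_pgen_inv_gt (g : Gr m) (i : Fin n) (l : ℕ) (hl : (i : ℕ) < l) :
    cut m l (g * (pgen m i)⁻¹) = cut m l g * (pgen m i)⁻¹ := by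
  funext j
  simp only [cut, Pi.mul_apply]
  split
  · rfl
  · next hj =>
      rw [Pi.inv_apply, pgen, Pi.mulSingle_eq_of_ne (by intro e; rw [e] at hj; omega)]
      simp

lemma cut_all (g : Gr m) : cut m n g = g := by
  funext j; simp only [cut, if_pos j.isLt]

lemma pt_zero (l : Fin n) (g : Gr m) : pt m l 0 g = cut m l g := by
  rw [pt, pow_zero, mul_one]

lemma pt_cd (l : Fin n) (g : Gr m) [NeZero (m l)] :
    pt m l (cd m g l) g = cut m ((l : ℕ) + 1) g := by
  funext j
  simp only [pt, Pi.mul_apply, cut]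
  rcases lt_trichotomy (j : ℕ) (l : ℕ) with hj | hj | hj
  · rw [if_pos hj, if_pos (by omega), pgen_pow_apply_ne _ _ _ _ (by intro e; rw [e] at hj; omega)]
    rw [mul_one]
  · have : j = l := Fin.ext hj
    subst this
    rw [if_neg (by omega), if_pos (by omega), one_mul, pgen_pow_apply_self, cd,
      ZMod.natCast_rightInverse _]
    rfl
  · rw [if_neg (by omega), if_neg (by omega), one_mul,
      pgen_pow_apply_ne _ _ _ _ (by intro e; rw [e] at hj; omega)]

lemma pt_succ_pgen_inv (l : Fin n) (k : ℕ) (g : Gr m) :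
    pt m l (k + 1) g * (pgen m l)⁻¹ = pt m l k g := by
  rw [pt, pt, pow_succ, ← mul_assoc, mul_inv_cancel_right]

lemma pt_mul_pgen_inv_le (g : Gr m) (i l : Fin n) (k : ℕ) (hl : (l : ℕ) ≤ (i : ℕ)) :
    pt m l k (g * (pgen m i)⁻¹) = pt m l k g := by
  rw [pt, pt, cut_mul_pgen_inv_le _ _ _ _ hl]

lemma pt_mul_pgen_inv_gt (g : Gr m) (i l : Fin n) (k : ℕ) (hl : (i : ℕ) < (l : ℕ)) :
    pt m l k (g * (pgen m i)⁻¹) = pt m l k g * (pgen m i)⁻¹ := by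
  rw [pt, pt, cut_mul_pgen_inv_gt _ _ _ _ hl, mul_right_comm]

/-- generation lemma: a function invariant under right multiplication by the
generators is constant. -/
lemma invariant_const [∀ i, NeZero (m i)] {X : Type*} (u : Gr m → X)
    (hu : ∀ (j : Fin n) (h : Gr m), u (h * pgen m j) = u h) (g : Gr m) :
    u g = u 1 := by
  have hpow : ∀ (j : Fin n) (k : ℕ) (h : Gr m), u (h * (pgen m j) ^ k) = u h := by
    intro j k
    induction k with
    | zero => intro h; simp
    | succ k ih => intro h; rw [pow_succ, ← mul_assoc, hu, ih]
  have hg : g = ∏ j : Fin n, (pgen m j) ^ (cd m g j) := by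
    conv_lhs => rw [← Finset.univ_prod_mulSingle g]
    exact Finset.prod_congr rfl fun j _ => mulSingle_eq_pgen_pow m j (g j)
  rw [hg]
  have : ∀ s : Finset (Fin n), u (∏ j ∈ s, (pgen m j) ^ (cd m g j)) = u 1 := by
    intro s
    induction s using Finset.induction with
    | empty => rw [Finset.prod_empty]
    | insert a s' hns ih =>
        rw [Finset.prod_insert hns, mul_comm, hpow, ih]
  exact this Finset.univ


end St12

namespace St12

variable {n : ℕ} (m : Fin n → ℕ)

/-- The path integral of the family α along the staircase path from 1 to g. -/
noncomputable def Yd (α : Fin n → QG (Gr m)) (g : Gr m) : ℚ :=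
  ∑ l : Fin n, ∑ k ∈ Finset.range (cd m g l), α l (pt m l (k + 1) g)

/-- The period of α i around the i-th cyclic factor. -/
noncomputable def Cper (α : Fin n → QG (Gr m)) (i : Fin n) : ℚ :=
  ∑ k ∈ Finset.range (m i), α i ((pgen m i) ^ k)

/-- The correction term δ i. -/
noncomputable def dl (α : Fin n → QG (Gr m)) (i : Fin n) (g : Gr m) : ℚ :=
  Yd m α g - Yd m α (g * (pgen m i)⁻¹)
    + (if cd m g i = 0 then Cper m α i else 0)

lemma cross (α : Fin n → QG (Gr m)) (i j : Fin n) (g : Gr m) :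
    dl m α i g - dl m α i (g * (pgen m j)⁻¹)
      = dl m α j g - dl m α j (g * (pgen m i)⁻¹) := by
  rcases eq_or_ne i j with rfl | hij
  · rfl
  · simp only [dl]
    rw [cd_mul_pgen_inv_ne m g j i hij, cd_mul_pgen_inv_ne m g i j (Ne.symm hij),
      mul_right_comm g (pgen m j)⁻¹ (pgen m i)⁻¹]
    ring

lemma cyc_sum {X : Type*} [AddCommGroup X] (u : Gr m → X) (M : ℕ) (hM : M ≠ 0)
    (p : Gr m) (hp : p ^ M = 1) (h : Gr m) :
    ∑ k ∈ Finset.range M, u (h * p ^ k * p⁻¹) = ∑ k ∈ Finset.range M, u (h * p ^ k) := by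
  obtain ⟨M', rfl⟩ : ∃ M', M = M' + 1 := ⟨M - 1, by omega⟩
  rw [Finset.sum_range_succ' (fun k => u (h * p ^ k * p⁻¹)) M',
      Finset.sum_range_succ (fun k => u (h * p ^ k)) M']
  congr 1
  · exact Finset.sum_congr rfl fun k _ => by
      rw [pow_succ, ← mul_assoc, mul_inv_cancel_right]
  · rw [pow_zero, mul_one]
    congr 2
    have : p ^ M' = p⁻¹ := by
      rw [eq_inv_iff_mul_eq_one, ← pow_succ, hp]
    rw [this]

section withCocycle

variable [∀ i, NeZero (m i)] (α : Fin n → QG (Gr m))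
variable (hc : ∀ i j (x : Gr m),
    phi (α i x) - phi (α i (x * (pgen m j)⁻¹))
      = phi (α j x) - phi (α j (x * (pgen m i)⁻¹)))

include hc

lemma period_inv (i j : Fin n) (h : Gr m) :
    ∑ k ∈ Finset.range (m i), phi (α i (h * pgen m j * (pgen m i) ^ k))
      = ∑ k ∈ Finset.range (m i), phi (α i (h * (pgen m i) ^ k)) := by
  rw [← sub_eq_zero, ← Finset.sum_sub_distrib]
  have step : ∀ k : ℕ,
      phi (α i (h * pgen m j * (pgen m i) ^ k)) - phi (α i (h * (pgen m i) ^ k))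
        = phi (α j (h * pgen m j * (pgen m i) ^ k))
          - phi (α j (h * pgen m j * (pgen m i) ^ k * (pgen m i)⁻¹)) := by
    intro k
    have hx := hc i j (h * pgen m j * (pgen m i) ^ k)
    have e : h * pgen m j * (pgen m i) ^ k * (pgen m j)⁻¹ = h * (pgen m i) ^ k := by
      rw [mul_right_comm h (pgen m j) ((pgen m i) ^ k), mul_inv_cancel_right]
    rw [e] at hx
    exact hx
  rw [Finset.sum_congr rfl (fun k _ => step k), Finset.sum_sub_distrib,
    cyc_sum m (fun x => phi (α j x)) (m i) (NeZero.ne _) _ (pgen_pow_m m i) (h * pgen m j),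
    sub_self]

lemma period_const (i : Fin n) (h : Gr m) :
    ∑ k ∈ Finset.range (m i), phi (α i (h * (pgen m i) ^ k))
      = ∑ k ∈ Finset.range (m i), phi (α i ((pgen m i) ^ k)) := by
  have := invariant_const m
    (fun h => ∑ k ∈ Finset.range (m i), phi (α i (h * (pgen m i) ^ k)))
    (fun j h => period_inv m α hc i j h) h
  simpa using this

lemma delta_cong (i : Fin n) (g : Gr m) :
    phi (dl m α i g) = phi (α i g) := by
  classical
  have hTdef : phi (dl m α i g)
      = (∑ l : Fin n,
          ((∑ k ∈ Finset.range (cd m g l), phi (α l (pt m l (k + 1) g)))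
           - (∑ k ∈ Finset.range (cd m (g * (pgen m i)⁻¹) l),
               phi (α l (pt m l (k + 1) (g * (pgen m i)⁻¹))))))
        + (if cd m g i = 0 then phi (Cper m α i) else 0) := by
    rw [dl, map_add, map_sub, apply_ite phi, map_zero, Yd, Yd, map_sum, map_sum]
    congr 1
    rw [← Finset.sum_sub_distrib]
    exact Finset.sum_congr rfl fun l _ => by rw [map_sum, map_sum]
  set T : Fin n → QZ := fun l =>
      ((∑ k ∈ Finset.range (cd m g l), phi (α l (pt m l (k + 1) g)))
       - (∑ k ∈ Finset.range (cd m (g * (pgen m i)⁻¹) l),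
           phi (α l (pt m l (k + 1) (g * (pgen m i)⁻¹))))) with hTdef2
  set ψ : ℕ → QZ := fun l => phi (α i (cut m l g)) with hψ
  set S : QZ := ∑ k ∈ Finset.range (m i), phi (α i (pt m i k g)) with hSdef
  -- the period sum S equals the base period
  have hSC : S = phi (Cper m α i) := by
    rw [hSdef, Cper, map_sum]
    have : ∀ k ∈ Finset.range (m i), phi (α i (pt m i k g)) = phi (α i (cut m i g * (pgen m i) ^ k)) := by
      intro k _; rw [pt]
    rw [Finset.sum_congr rfl this, period_const m α hc i (cut m i g)]
  have hcdqi : cd m (g * (pgen m i)⁻¹) i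
      = if cd m g i = 0 then m i - 1 else cd m g i - 1 := by
    simp only [cd]
    rw [toAdd_mul_pgen_inv_self, val_sub_one]
    exact if_congr Iff.rfl rfl rfl
  have hTlt : ∀ l : Fin n, (l : ℕ) < (i : ℕ) → T l = 0 := by
    intro l hl
    have hne : l ≠ i := by intro e; rw [e] at hl; omega
    rw [hTdef2]
    simp only
    rw [cd_mul_pgen_inv_ne m g i l hne, sub_eq_zero]
    exact Finset.sum_congr rfl fun k _ => by
      rw [pt_mul_pgen_inv_le m g i l (k + 1) (by omega : (l:ℕ) ≤ (i:ℕ))]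
  have hTgt : ∀ l : Fin n, (i : ℕ) < (l : ℕ) → T l = ψ ((l : ℕ) + 1) - ψ (l : ℕ) := by
    intro l hl
    have hne : l ≠ i := by intro e; rw [e] at hl; omega
    rw [hTdef2]
    simp only
    rw [cd_mul_pgen_inv_ne m g i l hne, ← Finset.sum_sub_distrib]
    have hstep : ∀ k ∈ Finset.range (cd m g l),
        phi (α l (pt m l (k + 1) g)) - phi (α l (pt m l (k + 1) (g * (pgen m i)⁻¹)))
          = phi (α i (pt m l (k + 1) g)) - phi (α i (pt m l k g)) := by
      intro k _
      rw [pt_mul_pgen_inv_gt m g i l (k + 1) hl]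
      have hx := hc l i (pt m l (k + 1) g)
      rw [pt_succ_pgen_inv] at hx
      exact hx
    rw [Finset.sum_congr rfl hstep,
      Finset.sum_range_sub (fun k => phi (α i (pt m l k g))) (cd m g l)]
    rw [pt_cd, pt_zero]
  have hTi : T i = ψ ((i : ℕ) + 1) - (if cd m g i = 0 then S else 0) := by
    have hptq : ∀ k : ℕ, pt m i k (g * (pgen m i)⁻¹) = pt m i k g :=
      fun k => pt_mul_pgen_inv_le m g i i k le_rfl
    by_cases h0 : cd m g i = 0
    · rw [if_pos h0, hTdef2]
      simp only
      rw [hcdqi, if_pos h0, h0, Finset.range_zero, Finset.sum_empty]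
      have hm : m i = (m i - 1) + 1 := by have := NeZero.ne (m i); omega
      have hSplit : S = (∑ k ∈ Finset.range (m i - 1), phi (α i (pt m i (k + 1) g)))
          + phi (α i (pt m i 0 g)) := by
        rw [hSdef, hm, Finset.sum_range_succ' (fun k => phi (α i (pt m i k g))) (m i - 1)]
        simp
      have hpt0 : pt m i 0 g = cut m ((i : ℕ) + 1) g := by
        rw [← pt_cd m i g, h0]
      rw [hSplit, hpt0]
      have : ∀ k ∈ Finset.range (m i - 1),
          phi (α i (pt m i (k + 1) (g * (pgen m i)⁻¹))) = phi (α i (pt m i (k + 1) g)) := by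
        intro k _; rw [hptq]
      rw [Finset.sum_congr rfl this]
      rw [hψ]
      abel
    · rw [if_neg h0, hTdef2]
      simp only
      rw [hcdqi, if_neg h0]
      have : ∀ k ∈ Finset.range (cd m g i - 1),
          phi (α i (pt m i (k + 1) (g * (pgen m i)⁻¹))) = phi (α i (pt m i (k + 1) g)) := by
        intro k _; rw [hptq]
      rw [Finset.sum_congr rfl this]
      have hc' : cd m g i = (cd m g i - 1) + 1 := by omega
      nth_rewrite 1 [hc']
      rw [Finset.sum_range_succ (fun k => phi (α i (pt m i (k + 1) g))) (cd m g i - 1)]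
      rw [add_sub_cancel_left]
      rw [← hc']
      rw [pt_cd]
      rw [hψ, sub_zero]
  -- assemble the sum
  have hisucc : (i : ℕ) + 1 ≤ n := i.isLt
  have hsum : (∑ l : Fin n, T l) = T i + (ψ n - ψ ((i : ℕ) + 1)) := by
    set T' : ℕ → QZ := fun l => if hl : l < n then T ⟨l, hl⟩ else 0 with hT'
    have h1 : (∑ l : Fin n, T l) = ∑ l ∈ Finset.range n, T' l := by
      rw [← Fin.sum_univ_eq_sum_range T' n]
      exact Finset.sum_congr rfl fun l _ => by
        rw [hT']; simp only; rw [dif_pos l.isLt]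
    rw [h1, Finset.range_eq_Ico,
      ← Finset.sum_Ico_consecutive _ (Nat.zero_le ((i : ℕ) + 1)) hisucc]
    have h2 : (∑ l ∈ Finset.Ico 0 ((i : ℕ) + 1), T' l) = T' i := by
      apply Finset.sum_eq_single_of_mem
      · simp [Nat.lt_succ_self]
      · intro l hl hlne
        simp only [Finset.mem_Ico] at hl
        have hln : l < n := by omega
        rw [hT']; simp only; rw [dif_pos hln]
        exact hTlt ⟨l, hln⟩ (by simp; omega)
    have h3 : (∑ l ∈ Finset.Ico ((i : ℕ) + 1) n, T' l) = ψ n - ψ ((i : ℕ) + 1) := by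
      have : ∀ l ∈ Finset.Ico ((i : ℕ) + 1) n, T' l = ψ (l + 1) - ψ l := by
        intro l hl
        simp only [Finset.mem_Ico] at hl
        have hln : l < n := hl.2
        rw [hT']; simp only; rw [dif_pos hln]
        exact hTgt ⟨l, hln⟩ (by simp; omega)
      rw [Finset.sum_congr rfl this,
        Finset.sum_Ico_eq_sub (fun l => ψ (l + 1) - ψ l) hisucc,
        Finset.sum_range_sub ψ, Finset.sum_range_sub ψ]
      abel
    rw [h2, h3]
    have : T' (i : ℕ) = T i := by
      rw [hT']; simp only; rw [dif_pos i.isLt]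
    rw [this]
  rw [hTdef, hsum, hTi]
  · have hψn : ψ n = phi (α i g) := by rw [hψ]; simp only; rw [cut_all]
    rw [hψn, ← hSC]
    by_cases h0 : cd m g i = 0 <;> abel

end withCocycle

end St12


open St12

/-- The kernel lemma: if r ∈ M(A,B) (with A = B = {p₁, …, pₙ}) admits a representation
r(pᵢ,pⱼ) = α(pᵢ)(e − pⱼ) + β(pⱼ)(e − pᵢ) with α, β taking values in ℚ[G], and if moreover
(α(pᵢ) + β(pᵢ))(e − pⱼ) ∈ ℤ[G] for all i, j, then r lies in 𝒜 + ℬ: there are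
α̃, β̃ : {p₁, …, pₙ} → ℤ[G] with r(pᵢ,pⱼ) = α̃(pᵢ)(e − pⱼ) + β̃(pⱼ)(e − pᵢ) for all i, j. -/
theorem statement12
    (n : ℕ) (hn : 1 ≤ n) (m : Fin n → ℕ) [∀ i, NeZero (m i)]
    (r : Fin n → Fin n → ZG (Gr m))
    (α β : Fin n → QG (Gr m))
    (hr : ∀ i j, toQ (Gr m) (r i j)
      = α i * (1 - MonoidAlgebra.of ℚ (Gr m) (pgen m j))
        + β j * (1 - MonoidAlgebra.of ℚ (Gr m) (pgen m i)))
    (h : ∀ i j, MemZG (Gr m)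
      ((α i + β i) * (1 - MonoidAlgebra.of ℚ (Gr m) (pgen m j)))) :
    ∃ αt βt : Fin n → ZG (Gr m), ∀ i j,
      r i j = αt i * (1 - MonoidAlgebra.of ℤ (Gr m) (pgen m j))
        + βt j * (1 - MonoidAlgebra.of ℤ (Gr m) (pgen m i)) := by
  classical
  -- coefficientwise form of hr
  have hrc : ∀ i j (g : Gr m), ((r i j g : ℤ) : ℚ)
      = (α i g - α i (g * (pgen m j)⁻¹)) + (β j g - β j (g * (pgen m i)⁻¹)) := by
    intro i j g
    rw [← toQ_apply, hr i j, MonoidAlgebra.coeff_add, Finsupp.add_apply, mul_one_sub_applyQ, mul_one_sub_applyQ]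
  -- coefficientwise cocycle condition for α
  have hcoc : ∀ i j (x : Gr m),
      phi (α i x) - phi (α i (x * (pgen m j)⁻¹))
        = phi (α j x) - phi (α j (x * (pgen m i)⁻¹)) := by
    intro i j x
    have e1 : phi (α i x) - phi (α i (x * (pgen m j)⁻¹))
        + (phi (β j x) - phi (β j (x * (pgen m i)⁻¹))) = 0 := by
      have h1 := hrc i j x
      have h2 : phi (((r i j x : ℤ) : ℚ)) = 0 := phi_intCast _
      rw [h1] at h2
      rw [← h2]
      simp only [map_add, map_sub]
    obtain ⟨z, hz⟩ := h j i
    have e2 : phi (α j x) - phi (α j (x * (pgen m i)⁻¹))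
        + (phi (β j x) - phi (β j (x * (pgen m i)⁻¹))) = 0 := by
      have hzx : ((z x : ℤ) : ℚ) = (α j x + β j x)
          - (α j (x * (pgen m i)⁻¹) + β j (x * (pgen m i)⁻¹)) := by
        rw [← toQ_apply, hz, mul_one_sub_applyQ, MonoidAlgebra.coeff_add, Finsupp.add_apply, Finsupp.add_apply]
      have h2 : phi (((z x : ℤ) : ℚ)) = 0 := phi_intCast _
      rw [hzx] at h2
      rw [← h2]
      simp only [map_sub, map_add]
      abel
    have e3 : phi (α i x) - phi (α i (x * (pgen m j)⁻¹))
        - (phi (α j x) - phi (α j (x * (pgen m i)⁻¹))) = 0 := by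
      rw [← sub_eq_zero.mpr (e1.trans e2.symm)]
      abel
    exact sub_eq_zero.mp e3
  have hdelta : ∀ i g, phi (dl m α i g) = phi (α i g) :=
    fun i g => delta_cong m α hcoc i g
  -- invariance of η j := β j + δ j
  set η : Fin n → Gr m → ℚ := fun j g => β j g + dl m α j g with hη
  have hinv : ∀ (j i : Fin n) (g : Gr m),
      phi (η j g) - phi (η j (g * (pgen m i)⁻¹)) = 0 := by
    intro j i g
    have hcr := cross m α i j g
    have e0 : phi (η j g) - phi (η j (g * (pgen m i)⁻¹))
        = phi (β j g) - phi (β j (g * (pgen m i)⁻¹))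
          + (phi (dl m α j g) - phi (dl m α j (g * (pgen m i)⁻¹))) := by
      simp only [hη, map_add]; abel
    rw [e0]
    have h4 : phi (dl m α j g) - phi (dl m α j (g * (pgen m i)⁻¹))
        = phi (α i g) - phi (α i (g * (pgen m j)⁻¹)) := by
      rw [← map_sub, ← hcr, map_sub, hdelta, hdelta]
    rw [h4]
    have h5 := hrc i j g
    have h6 : phi (((r i j g : ℤ) : ℚ)) = 0 := phi_intCast _
    rw [h5] at h6
    rw [← h6]
    simp only [map_add, map_sub]
    abel
  have hconst : ∀ (j : Fin n) (g : Gr m), phi (η j g) = phi (η j 1) := by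
    intro j g
    refine invariant_const m (fun x => phi (η j x)) ?_ g
    intro i hgr
    have hx := hinv j i (hgr * pgen m i)
    rw [mul_inv_cancel_right] at hx
    exact sub_eq_zero.mp hx
  -- integer parts
  set A : Fin n → Gr m → ℤ := fun i g => ⌊(α i g : ℚ) - dl m α i g⌋ with hA
  set B : Fin n → Gr m → ℤ := fun j g => ⌊η j g⌋ with hB
  have hAc : ∀ i g, ((A i g : ℤ) : ℚ) = α i g - dl m α i g := by
    intro i g
    have h0 : phi ((α i g : ℚ) - dl m α i g) = 0 := by
      rw [map_sub, hdelta, sub_self]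
    obtain ⟨k, hk⟩ := phi_eq_zero_iff.mp h0
    rw [hA]; simp only; rw [hk, Int.floor_intCast]
  have hBc : ∀ (j : Fin n) (g g' : Gr m),
      ((B j g : ℤ) : ℚ) - ((B j g' : ℤ) : ℚ) = η j g - η j g' := by
    intro j g g'
    have he : phi (η j g) = phi (η j g') := (hconst j g).trans (hconst j g').symm
    obtain ⟨k, hk⟩ := phi_eq_iff.mp he
    have hg : η j g = η j g' + (k : ℚ) := by linarith
    rw [hB]; simp only; rw [hg, Int.floor_add_intCast]
    push_cast; ring
  refine ⟨fun i => MonoidAlgebra.ofCoeff (Finsupp.equivFunOnFinite.symm (A i)),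
    fun j => MonoidAlgebra.ofCoeff (Finsupp.equivFunOnFinite.symm (B j)), ?_⟩
  intro i j
  apply MonoidAlgebra.ext
  apply Finsupp.ext
  intro g
  rw [MonoidAlgebra.coeff_add, Finsupp.add_apply, mul_one_sub_applyZ, mul_one_sub_applyZ]
  simp only [MonoidAlgebra.coeff_ofCoeff, Finsupp.coe_equivFunOnFinite_symm]
  apply Int.cast_injective (α := ℚ)
  push_cast
  rw [hAc, hAc, hBc]
  have hcr := cross m α i j g
  have h5 := hrc i j g
  simp only [hη]
  linear_combination h5 + hcr
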